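/- For every λ ∈ ℂ with λ ≠ 0, the complex Lie algebra on ℂ³ with brackets [e₁,e₃] = λe₁ + e₂, [e₂,e₃] = λe₂ (all other basis brackets zero) is isomorphic to the Lie algebra g₂ on ℂ³ with brackets [e₁,e₃] = e₁ + e₂, [e₂,e₃] = e₂ (all other basis brackets zero). -/

import Mathlib

noncomputable section

/-- The underlying vector space `ℂ³`. -/
abbrev E3 : Type := Fin 3 → ℂ

/-- The standard basis vectors of `ℂ³`. -/
def e1 : E3 := ![1, 0, 0]
def e2 : E3 := ![0, 1, 0]

/-- The unique antisymmetric bilinear bracket on `ℂ³` with `[e₁,e₂] = c12`,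
`[e₁,e₃] = c13`, `[e₂,e₃] = c23`. -/
def br (c12 c13 c23 : E3) (u v : E3) : E3 :=
  (u 0 * v 1 - u 1 * v 0) • c12 + (u 0 * v 2 - u 2 * v 0) • c13 +
    (u 1 * v 2 - u 2 * v 1) • c23

/-- For every `λ ≠ 0`, the Lie algebra with `[e₁,e₃] = λe₁ + e₂`, `[e₂,e₃] = λe₂`
is isomorphic to the Lie algebra `g₂` with `[e₁,e₃] = e₁ + e₂`, `[e₂,e₃] = e₂`. -/
theorem defective_matrix_algebra_iso_g2 (lam : ℂ) (hlam : lam ≠ 0) :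
    ∃ g : E3 ≃ₗ[ℂ] E3, ∀ u v : E3,
      g (br 0 (lam • e1 + e2) (lam • e2) u v) = br 0 (e1 + e2) e2 (g u) (g v) := by
  refine ⟨{ toFun := fun u => ![u 0, lam * u 1, lam * u 2]
            invFun := fun u => ![u 0, lam⁻¹ * u 1, lam⁻¹ * u 2]
            map_add' := by
              intro u v
              funext i
              fin_cases i <;> simp <;> ring
            map_smul' := by
              intro c u
              funext i
              fin_cases i <;> simp <;> ring
            left_inv := by
              intro u
              funext i
              fin_cases i <;> simp [hlam]
            right_inv := by
              intro u
              funext i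
              fin_cases i <;> simp [hlam] }, ?_⟩
  intro u v
  funext i
  fin_cases i <;>
    simp [br, e1, e2] <;> ring
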